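/- The formula (◇x → ◇y) → (¬◇y ∨ ◇(x → y)) is not valid over witnessed Gödel-Kripke models with valued accessibility: in the model with W = {v, w}, R(v,w) = 1/2 (R = 0 elsewhere), e(w,x) = 1, e(w,y) = 1/2, the formula evaluates at v to 1/2. -/

import Mathlib

/-- Gödel implication on the real unit interval (as reals). -/
noncomputable def gimp (x y : ℝ) : ℝ := if x ≤ y then 1 else y

/-- Gödel negation. -/
noncomputable def gneg (x : ℝ) : ℝ := gimp x 0
/-- Bi-modal formulas. -/
inductive MFm : Type where
  | var : ℕ → MFm
  | bot : MFm
  | and : MFm → MFm → MFm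
  | or : MFm → MFm → MFm
  | imp : MFm → MFm → MFm
  | box : MFm → MFm
  | dia : MFm → MFm

/-- Evaluation in a crisp Gödel-Kripke model: `□` is the infimum over
successors (`1` if there are none), `◇` the supremum (`0` if none). -/
noncomputable def ceval {W : Type} (R : W → W → Prop) (v : W → ℕ → ℝ) :
    MFm → W → ℝ
  | .var n, u => v u n
  | .bot, _ => 0
  | .and φ ψ, u => min (ceval R v φ u) (ceval R v ψ u)
  | .or φ ψ, u => max (ceval R v φ u) (ceval R v ψ u)
  | .imp φ ψ, u => gimp (ceval R v φ u) (ceval R v ψ u)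
  | .box φ, u => sInf ({x | ∃ w, R u w ∧ x = ceval R v φ w} ∪ {1})
  | .dia φ, u => sSup ({x | ∃ w, R u w ∧ x = ceval R v φ w} ∪ {0})

/-- A crisp model is witnessed if every `□`-infimum and `◇`-supremum is
attained at a successor (or equals the trivial value `1`, resp. `0`,
corresponding to a witness with `R`-value `0` in the valued reading). -/
def CWitnessed {W : Type} (R : W → W → Prop) (v : W → ℕ → ℝ) : Prop :=
  ∀ (φ : MFm) (u : W),
    (ceval R v (.box φ) u = 1 ∨
      ∃ w, R u w ∧ ceval R v φ w = ceval R v (.box φ) u) ∧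
    (ceval R v (.dia φ) u = 0 ∨
      ∃ w, R u w ∧ ceval R v φ w = ceval R v (.dia φ) u)
/-- Evaluation in a valued Gödel-Kripke model: `R : W → W → ℝ` is the fuzzy
accessibility, `e(v,□φ) = ⨅_w (R v w → e(w,φ))`, `e(v,◇φ) = ⨆_w (R v w ∧ e(w,φ))`. -/
noncomputable def veval {W : Type} (R : W → W → ℝ) (v : W → ℕ → ℝ) :
    MFm → W → ℝ
  | .var n, u => v u n
  | .bot, _ => 0
  | .and φ ψ, u => min (veval R v φ u) (veval R v ψ u)
  | .or φ ψ, u => max (veval R v φ u) (veval R v ψ u)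
  | .imp φ ψ, u => gimp (veval R v φ u) (veval R v ψ u)
  | .box φ, u => sInf ((Set.range fun w => gimp (R u w) (veval R v φ w)) ∪ {1})
  | .dia φ, u => sSup ((Set.range fun w => min (R u w) (veval R v φ w)) ∪ {0})

/-- `(◇x → ◇y) → (¬◇y ∨ ◇(x → y))` is not valid over witnessed
valued Gödel-Kripke models: in the two-world model with `R(v,w) = 1/2`,
`e(w,x) = 1`, `e(w,y) = 1/2`, it evaluates to `1/2` at `v`. -/

lemma range_bool (f : Bool → ℝ) : Set.range f = {f false, f true} := by
  ext z
  constructor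
  · rintro ⟨(b|b), rfl⟩ <;> simp
  · rintro (rfl | rfl)
    · exact ⟨false, rfl⟩
    · exact ⟨true, rfl⟩

lemma sup_bool (f : Bool → ℝ) : sSup (Set.range f ∪ {0}) = max (f false) (max (f true) 0) := by
  rw [range_bool]
  have h : ({f false, f true} : Set ℝ) ∪ {0} = insert (f false) (insert (f true) {(0:ℝ)}) := by
    ext z; simp; tauto
  rw [h, csSup_insert (((Set.finite_singleton _).insert _).bddAbove)
        ⟨f true, by simp⟩,
      csSup_insert (Set.finite_singleton _).bddAbove ⟨0, rfl⟩, csSup_singleton]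

theorem uwdia_fails_in_valued_models :
    let R : Bool → Bool → ℝ := fun a b => if a = false ∧ b = true then 1/2 else 0
    let v : Bool → ℕ → ℝ := fun a n =>
      if a = true then (if n = 0 then 1 else if n = 1 then 1/2 else 0) else 0
    let x : MFm := .var 0
    let y : MFm := .var 1
    veval R v
      (.imp (.imp (.dia x) (.dia y))
            (.or (.imp (.dia y) .bot) (.dia (.imp x y)))) false = 1/2 := by
  intro R v x y
  simp only [veval, sup_bool]
  norm_num [R, v, x, y, gimp, veval]
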